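/- Assume π/θ is not an integer and set Π = ⌊π/θ⌋, where θ = arctan(√(m/M)). Then after the Π-th collision the outgoing conditions hold: V_Π < v_Π < 0, i.e. both balls move away from the wall with the heavy ball faster, so no further collision can occur. Together with the continuation property (a further collision follows each step n < Π), this shows that the total number of collisions in the Galperin billiard equals Π = ⌊π/arctan(√(m/M))⌋; in particular, for mass ratio M/m = b^{2N} it equals ⌊π/arctan(b^{−N})⌋. -/

import Mathlib

set_option maxHeartbeats 1600000 in
/-- Termination of the Galperin billiard: if `π/θ` is not an integer and
`Π = ⌊π/θ⌋`, then after the `Π`-th collision the outgoing conditions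
`V_Π < v_Π < 0` hold, so no further collision can occur and the total number
of collisions equals `Π = ⌊π/arctan √(m/M)⌋`; in particular, for mass ratio
`M/m = b^{2N}` it equals `⌊π/arctan(b^{−N})⌋`. -/
theorem galperin_collision_termination
    (M m : ℝ) (hM : 0 < M) (hm : 0 < m)
    (θ : ℝ) (hθ : θ = Real.arctan (Real.sqrt (m / M)))
    (hirr : ¬ ∃ z : ℤ, Real.pi / θ = (z : ℝ))
    (Pc : ℤ) (hPc : Pc = ⌊Real.pi / θ⌋)
    (V v : ℕ → ℝ) (hV0 : 0 < V 0) (hv0 : v 0 = 0)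
    (hBB : ∀ k : ℕ,
      V (2 * k + 1) = ((M - m) * V (2 * k) + 2 * m * v (2 * k)) / (M + m) ∧
      v (2 * k + 1) = (2 * M * V (2 * k) + (m - M) * v (2 * k)) / (M + m))
    (hBW : ∀ k : ℕ, 1 ≤ k →
      V (2 * k) = V (2 * k - 1) ∧ v (2 * k) = -v (2 * k - 1)) :
    V Pc.toNat < v Pc.toNat ∧ v Pc.toNat < 0 ∧
    (∀ (b : ℝ) (N : ℕ), 1 < b → M = b ^ (2 * N) * m →
      Pc = ⌊Real.pi / Real.arctan (b ^ (-(N : ℤ)))⌋) := by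
  have hMm : (0:ℝ) < M + m := by linarith
  set sM := Real.sqrt M with hsMdef
  set sm := Real.sqrt m with hsmdef
  set t := Real.sqrt (M + m) with htdef
  have hsM2 : sM ^ 2 = M := Real.sq_sqrt hM.le
  have hsm2 : sm ^ 2 = m := Real.sq_sqrt hm.le
  have ht2 : t ^ 2 = M + m := Real.sq_sqrt hMm.le
  have hsMpos : 0 < sM := Real.sqrt_pos.2 hM
  have hsmpos : 0 < sm := Real.sqrt_pos.2 hm
  have htpos : 0 < t := Real.sqrt_pos.2 hMm
  -- the angle θ
  have hxpos : 0 < Real.sqrt (m / M) := Real.sqrt_pos.2 (div_pos hm hM)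
  have hθpos : 0 < θ := by
    rw [hθ, ← Real.arctan_zero]; exact Real.arctan_strictMono hxpos
  have hθlt : θ < Real.pi / 2 := by rw [hθ]; exact Real.arctan_lt_pi_div_two _
  have hcpos : 0 < Real.cos θ := by rw [hθ]; exact Real.cos_arctan_pos _
  have hx2 : Real.sqrt (m / M) ^ 2 = m / M := Real.sq_sqrt (div_pos hm hM).le
  have hcsq : Real.cos θ ^ 2 = M / (M + m) := by
    rw [hθ, Real.cos_sq_arctan, hx2]
    field_simp
  have hcos : Real.cos θ = sM / t := by
    have h1 : (sM / t) ^ 2 = M / (M + m) := by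
      rw [div_pow, hsM2, ht2]
    have h2 : Real.cos θ = Real.sqrt (Real.cos θ ^ 2) :=
      (Real.sqrt_sq hcpos.le).symm
    rw [h2, hcsq, ← h1, Real.sqrt_sq (by positivity)]
  have hsin : Real.sin θ = sm / t := by
    have htan : Real.tan θ = Real.sqrt (m / M) := by rw [hθ, Real.tan_arctan]
    have h3 : Real.sin θ = Real.tan θ * Real.cos θ := by
      rw [Real.tan_eq_sin_div_cos]
      field_simp
    rw [h3, htan, hcos, Real.sqrt_div hm.le, ← hsMdef, ← hsmdef]
    field_simp
  have hcos2 : Real.cos (2 * θ) = (M - m) / (M + m) := by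
    rw [Real.cos_two_mul, hcos]
    have htne : t ≠ 0 := htpos.ne'
    field_simp
    nlinarith [ht2, hsM2]
  have hsin2 : Real.sin (2 * θ) = 2 * sM * sm / (M + m) := by
    rw [Real.sin_two_mul, hsin, hcos]
    have htne : t ≠ 0 := htpos.ne'
    field_simp
    linear_combination (-1) * ht2
  have hMeq : M = sM ^ 2 := hsM2.symm
  have hmeq : m = sm ^ 2 := hsm2.symm
  have hsmne : sm ≠ 0 := hsmpos.ne'
  have hMmne : M + m ≠ 0 := hMm.ne'
  -- the one-step collision identity
  have step : ∀ a : ℝ,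
      ((M - m) * (V 0 * Real.cos a) + 2 * m * (-(sM / sm * (V 0 * Real.sin a)))) / (M + m)
        = V 0 * Real.cos (a + 2 * θ) ∧
      (2 * M * (V 0 * Real.cos a) + (m - M) * (-(sM / sm * (V 0 * Real.sin a)))) / (M + m)
        = sM / sm * (V 0 * Real.sin (a + 2 * θ)) := by
    intro a
    rw [Real.cos_add, Real.sin_add, hcos2, hsin2]
    constructor
    · rw [hMeq, hmeq]
      have h : sm ^ 2 + sM ^ 2 ≠ 0 := by positivity
      field_simp
      ring
    · rw [hMeq, hmeq]
      have h : sm ^ 2 + sM ^ 2 ≠ 0 := by positivity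
      field_simp
      ring
  -- closed form for the velocities
  have main : ∀ k : ℕ,
      V (2 * k) = V 0 * Real.cos (2 * (k:ℝ) * θ) ∧
      v (2 * k) = -(sM / sm * (V 0 * Real.sin (2 * (k:ℝ) * θ))) ∧
      V (2 * k + 1) = V 0 * Real.cos ((2 * (k:ℝ) + 2) * θ) ∧
      v (2 * k + 1) = sM / sm * (V 0 * Real.sin ((2 * (k:ℝ) + 2) * θ)) := by
    intro k
    induction k with
    | zero =>
        have e0 : V (2 * 0) = V 0 * Real.cos (2 * ((0:ℕ):ℝ) * θ) := by norm_num
        have e0' : v (2 * 0) = -(sM / sm * (V 0 * Real.sin (2 * ((0:ℕ):ℝ) * θ))) := by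
          norm_num [hv0]
        refine ⟨e0, e0', ?_, ?_⟩
        · have h := (hBB 0).1
          rw [e0, e0'] at h
          rw [h, (step (2 * ((0:ℕ):ℝ) * θ)).1]
          norm_num
        · have h := (hBB 0).2
          rw [e0, e0'] at h
          rw [h, (step (2 * ((0:ℕ):ℝ) * θ)).2]
          norm_num
    | succ k ih =>
        obtain ⟨_, _, ih3, ih4⟩ := ih
        have hidx : 2 * (k + 1) - 1 = 2 * k + 1 := by omega
        have hbw := hBW (k + 1) (by omega)
        have hang : ((2:ℝ) * (k:ℝ) + 2) * θ = 2 * (((k:ℕ)+1 : ℕ):ℝ) * θ := by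
          push_cast; ring
        have hV : V (2 * (k + 1)) = V 0 * Real.cos (2 * (((k:ℕ)+1 : ℕ):ℝ) * θ) := by
          rw [hbw.1, hidx, ih3, hang]
        have hv1 : v (2 * (k + 1)) = -(sM / sm * (V 0 * Real.sin (2 * (((k:ℕ)+1 : ℕ):ℝ) * θ))) := by
          rw [hbw.2, hidx, ih4, hang]
        refine ⟨hV, hv1, ?_, ?_⟩
        · have h := (hBB (k + 1)).1
          rw [hV, hv1] at h
          rw [h, (step (2 * (((k:ℕ)+1 : ℕ):ℝ) * θ)).1]
          congr 2
          push_cast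
          ring
        · have h := (hBB (k + 1)).2
          rw [hV, hv1] at h
          rw [h, (step (2 * (((k:ℕ)+1 : ℕ):ℝ) * θ)).2]
          congr 3
          push_cast
          ring
  -- bounds on Pc
  have hπpos := Real.pi_pos
  have hfl_le : (Pc : ℝ) ≤ Real.pi / θ := by rw [hPc]; exact Int.floor_le _
  have hfl_lt : (Pc : ℝ) < Real.pi / θ := by
    rcases lt_or_eq_of_le hfl_le with h | h
    · exact h
    · exact absurd ⟨Pc, h.symm⟩ hirr
  have hfl_gt : Real.pi / θ < (Pc : ℝ) + 1 := by
    rw [hPc]; exact Int.lt_floor_add_one _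
  have hPc2 : 2 ≤ Pc := by
    rw [hPc]
    refine Int.le_floor.mpr ?_
    push_cast
    rw [le_div_iff₀ hθpos]
    linarith
  have hPcnn : (0:ℤ) ≤ Pc := by omega
  obtain ⟨n, hndef⟩ : ∃ nn : ℕ, Pc.toNat = nn := ⟨_, rfl⟩
  rw [hndef]
  have hnint : (n : ℤ) = Pc := by rw [← hndef]; exact Int.toNat_of_nonneg hPcnn
  have hncast : ((n : ℕ) : ℝ) = (Pc : ℝ) := by exact_mod_cast hnint
  have hn2 : 2 ≤ n := by omega
  have hlt1 : (n : ℝ) * θ < Real.pi := by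
    rw [hncast]
    calc (Pc:ℝ) * θ < (Real.pi / θ) * θ := mul_lt_mul_of_pos_right hfl_lt hθpos
      _ = Real.pi := by field_simp
  have hgt1 : Real.pi < ((n : ℝ) + 1) * θ := by
    rw [hncast]
    calc Real.pi = (Real.pi / θ) * θ := by field_simp
      _ < ((Pc:ℝ) + 1) * θ := mul_lt_mul_of_pos_right hfl_gt hθpos
  have hnθpos : 0 < (n : ℝ) * θ := by
    have hn0 : 0 < n := by omega
    exact mul_pos (by exact_mod_cast hn0) hθpos
  have hsin_n_pos : 0 < Real.sin ((n : ℝ) * θ) :=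
    Real.sin_pos_of_pos_of_lt_pi hnθpos hlt1
  have hsin_n1_neg : Real.sin (((n : ℝ) + 1) * θ) < 0 := by
    have h1 : Real.sin (((n : ℝ) + 1) * θ - Real.pi) = -Real.sin (((n:ℝ)+1)*θ) :=
      Real.sin_sub_pi _
    have hexp : ((n:ℝ) + 1) * θ = (n:ℝ) * θ + θ := by ring
    have h2 : 0 < Real.sin (((n : ℝ) + 1) * θ - Real.pi) := by
      apply Real.sin_pos_of_pos_of_lt_pi
      · rw [hexp]; linarith
      · rw [hexp]; linarith
    linarith
  -- main inequalities
  have hmain2 : V n < v n ∧ v n < 0 := by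
    rcases Nat.even_or_odd n with ⟨k, hk⟩ | ⟨k, hk⟩
    · -- n = 2k
      have hk2 : n = 2 * k := by omega
      obtain ⟨h1, h2, _, _⟩ := main k
      have hkc : 2 * (k:ℝ) = (n:ℝ) := by rw [hk2]; push_cast; ring
      rw [hkc] at h1 h2
      rw [← hk2] at h1 h2
      have hvneg : v n < 0 := by
        rw [h2]
        have : 0 < sM / sm * (V 0 * Real.sin ((n:ℝ) * θ)) := by positivity
        linarith
      refine ⟨?_, hvneg⟩
      have hkey : sm * Real.cos ((n:ℝ) * θ) + sM * Real.sin ((n:ℝ) * θ)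
          = t * Real.sin (((n:ℝ) + 1) * θ) := by
        have hang : ((n:ℝ) + 1) * θ = (n:ℝ) * θ + θ := by ring
        rw [hang, Real.sin_add, hcos, hsin]
        field_simp
        ring
      have hneg : sm * Real.cos ((n:ℝ) * θ) + sM * Real.sin ((n:ℝ) * θ) < 0 := by
        rw [hkey]
        exact mul_neg_of_pos_of_neg htpos hsin_n1_neg
      have hdiff : V n - v n
          = V 0 * (sm * Real.cos ((n:ℝ) * θ) + sM * Real.sin ((n:ℝ) * θ)) / sm := by
        rw [h1, h2]
        field_simp
        ring
      have : V n - v n < 0 := by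
        rw [hdiff]
        exact div_neg_of_neg_of_pos (mul_neg_of_pos_of_neg hV0 hneg) hsmpos
      linarith
    · -- n = 2k + 1
      obtain ⟨_, _, h3, h4⟩ := main k
      have hkc : 2 * (k:ℝ) + 2 = (n:ℝ) + 1 := by rw [hk]; push_cast; ring
      rw [hkc] at h3 h4
      rw [← hk] at h3 h4
      have hvneg : v n < 0 := by
        rw [h4]
        have hq : 0 < sM / sm := by positivity
        exact mul_neg_of_pos_of_neg hq (mul_neg_of_pos_of_neg hV0 hsin_n1_neg)
      refine ⟨?_, hvneg⟩
      have hkey : sm * Real.cos (((n:ℝ) + 1) * θ) - sM * Real.sin (((n:ℝ) + 1) * θ)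
          = -(t * Real.sin ((n:ℝ) * θ)) := by
        have hang : (n:ℝ) * θ = ((n:ℝ) + 1) * θ - θ := by ring
        rw [hang, Real.sin_sub, hcos, hsin]
        field_simp
        ring
      have hneg : sm * Real.cos (((n:ℝ) + 1) * θ) - sM * Real.sin (((n:ℝ) + 1) * θ) < 0 := by
        rw [hkey]
        have : 0 < t * Real.sin ((n:ℝ) * θ) := mul_pos htpos hsin_n_pos
        linarith
      have hdiff : V n - v n
          = V 0 * (sm * Real.cos (((n:ℝ) + 1) * θ) - sM * Real.sin (((n:ℝ) + 1) * θ)) / sm := by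
        rw [h3, h4]
        field_simp
      have : V n - v n < 0 := by
        rw [hdiff]
        exact div_neg_of_neg_of_pos (mul_neg_of_pos_of_neg hV0 hneg) hsmpos
      linarith
  refine ⟨hmain2.1, hmain2.2, ?_⟩
  -- particular case M/m = b^(2N)
  intro b N hb hM2
  have hb0 : (0:ℝ) < b := by linarith
  have hbN : (0:ℝ) < b ^ N := pow_pos hb0 N
  have hzp : b ^ (-(N:ℤ)) = (b ^ N)⁻¹ := by rw [zpow_neg, zpow_natCast]
  have hsq : Real.sqrt (m / M) = (b ^ N)⁻¹ := by
    have hfrac : m / M = ((b ^ N)⁻¹) ^ 2 := by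
      rw [hM2, show 2 * N = N * 2 from by ring, pow_mul]
      field_simp
    rw [hfrac, Real.sqrt_sq (by positivity)]
  rw [hPc, hθ, hsq, hzp]
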